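/- Let C(x,y) = Φ(C(x)) be the run transform of the Catalan generating function. Then C(x,y) satisfies the quadratic equation x·C(x,y)^2 − C(x,y) + (1-x)/(1-xy) = 0, i.e., x·C(x,y)^2 = C(x,y) − (1-x)/(1-xy) as bivariate formal power series. -/

import Mathlib

open PowerSeries MvPowerSeries Finset

/-- Substitution of a bivariate power series with zero constant term (and positive
order in every monomial) into a univariate formal power series, defined
coefficient-wise. -/
noncomputable def substPS {R : Type*} [CommRing R]
    (a : MvPowerSeries (Fin 2) R) (f : PowerSeries R) : MvPowerSeries (Fin 2) R :=
  fun d => ∑ n ∈ Finset.range (d 0 + d 1 + 1),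
    (PowerSeries.coeff n f) * MvPowerSeries.coeff d (a ^ n)

/-- The run transform `Φ(f)(x,y) = ((1-x)/(1-xy)) · f(x(1-x)/(1-xy))`. -/
noncomputable def runTransform {R : Type*} [CommRing R] (f : PowerSeries R) :
    MvPowerSeries (Fin 2) R :=
  (1 - MvPowerSeries.X 0) * MvPowerSeries.invOfUnit (1 - MvPowerSeries.X 0 * MvPowerSeries.X 1) 1 *
    substPS ((MvPowerSeries.X 0 * (1 - MvPowerSeries.X 0)) *
      MvPowerSeries.invOfUnit (1 - MvPowerSeries.X 0 * MvPowerSeries.X 1) 1) f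

/-- The Catalan generating function `C(x) = Σ C_n x^n` (over `ℤ`). -/
noncomputable def catalanGF : PowerSeries ℤ := PowerSeries.mk fun n => (catalan n : ℤ)

section Aux

variable {R : Type*} [CommRing R]

lemma fin2_eq_zero_of_sum {p : Fin 2 →₀ ℕ} (h : p 0 + p 1 = 0) : p = 0 := by
  ext i
  fin_cases i <;> simp <;> omega

lemma coeff_pow_zero_of_lt {a : MvPowerSeries (Fin 2) R}
    (ha : MvPowerSeries.constantCoeff a = 0) :
    ∀ n (d : Fin 2 →₀ ℕ), d 0 + d 1 < n → MvPowerSeries.coeff d (a ^ n) = 0 := by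
  intro n
  induction n with
  | zero => intro d hd; omega
  | succ n ih =>
    intro d hd
    rw [pow_succ, MvPowerSeries.coeff_mul]
    apply Finset.sum_eq_zero
    rintro ⟨p, q⟩ hpq
    rw [Finset.HasAntidiagonal.mem_antidiagonal] at hpq
    have h0 : p 0 + q 0 = d 0 := by rw [← hpq]; simp
    have h1 : p 1 + q 1 = d 1 := by rw [← hpq]; simp
    by_cases hq : q 0 + q 1 = 0
    · have : q = 0 := fin2_eq_zero_of_sum hq
      subst this
      simp only [MvPowerSeries.coeff_zero_eq_constantCoeff_apply, ha, mul_zero]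
    · rw [ih p (by omega), zero_mul]

lemma coeff_aeval {a : MvPowerSeries (Fin 2) R}
    (ha : MvPowerSeries.constantCoeff a = 0) (P : Polynomial R) (d : Fin 2 →₀ ℕ) :
    MvPowerSeries.coeff d (Polynomial.aeval a P) =
      ∑ n ∈ Finset.range (d 0 + d 1 + 1), P.coeff n * MvPowerSeries.coeff d (a ^ n) := by
  have hdeg : P.natDegree < max (P.natDegree + 1) (d 0 + d 1 + 1) :=
    lt_of_lt_of_le (Nat.lt_succ_self _) (le_max_left _ _)
  rw [Polynomial.aeval_eq_sum_range' hdeg, map_sum]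
  simp only [LinearMap.map_smul, smul_eq_mul]
  symm
  apply Finset.sum_subset (Finset.range_subset_range.mpr (le_max_right _ _))
  intro n _ hn
  rw [Finset.mem_range, not_lt] at hn
  rw [coeff_pow_zero_of_lt ha n d (by omega), mul_zero]

lemma coeff_substPS {a : MvPowerSeries (Fin 2) R}
    (ha : MvPowerSeries.constantCoeff a = 0) (f : PowerSeries R) (d : Fin 2 →₀ ℕ)
    {N : ℕ} (hdN : d 0 + d 1 < N) :
    MvPowerSeries.coeff d (substPS a f) =
      MvPowerSeries.coeff d (Polynomial.aeval a (PowerSeries.trunc N f)) := by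
  rw [coeff_aeval ha]
  show (∑ n ∈ Finset.range (d 0 + d 1 + 1),
      (PowerSeries.coeff n f) * MvPowerSeries.coeff d (a ^ n)) = _
  apply Finset.sum_congr rfl
  intro n hn
  rw [Finset.mem_range] at hn
  rw [PowerSeries.coeff_trunc, if_pos (by omega)]

lemma substPS_one {a : MvPowerSeries (Fin 2) R}
    (ha : MvPowerSeries.constantCoeff a = 0) :
    substPS a (1 : PowerSeries R) = 1 := by
  ext d
  rw [coeff_substPS ha 1 d (Nat.lt_succ_self (d 0 + d 1)), PowerSeries.trunc_one, map_one]

lemma substPS_X {a : MvPowerSeries (Fin 2) R}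
    (ha : MvPowerSeries.constantCoeff a = 0) :
    substPS a (PowerSeries.X : PowerSeries R) = a := by
  ext d
  rw [coeff_substPS ha PowerSeries.X d (show d 0 + d 1 < d 0 + d 1 + 2 by omega),
    PowerSeries.trunc_X_of (by omega), Polynomial.aeval_X]

lemma substPS_add {a : MvPowerSeries (Fin 2) R}
    (ha : MvPowerSeries.constantCoeff a = 0) (f g : PowerSeries R) :
    substPS a (f + g) = substPS a f + substPS a g := by
  ext d
  rw [map_add, coeff_substPS ha (f + g) d (Nat.lt_succ_self (d 0 + d 1)),
    coeff_substPS ha f d (Nat.lt_succ_self (d 0 + d 1)),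
    coeff_substPS ha g d (Nat.lt_succ_self (d 0 + d 1)),
    map_add, map_add, map_add]

lemma substPS_mul {a : MvPowerSeries (Fin 2) R}
    (ha : MvPowerSeries.constantCoeff a = 0) (f g : PowerSeries R) :
    substPS a (f * g) = substPS a f * substPS a g := by
  classical
  ext d
  have hdN : d 0 + d 1 < d 0 + d 1 + 1 := Nat.lt_succ_self _
  rw [coeff_substPS ha (f * g) d hdN, MvPowerSeries.coeff_mul]
  have step : ∀ pq ∈ Finset.HasAntidiagonal.antidiagonal d,
      MvPowerSeries.coeff pq.1 (substPS a f) * MvPowerSeries.coeff pq.2 (substPS a g) =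
      MvPowerSeries.coeff pq.1 (Polynomial.aeval a (PowerSeries.trunc (d 0 + d 1 + 1) f)) *
        MvPowerSeries.coeff pq.2 (Polynomial.aeval a (PowerSeries.trunc (d 0 + d 1 + 1) g)) := by
    rintro ⟨p, q⟩ hpq
    rw [Finset.HasAntidiagonal.mem_antidiagonal] at hpq
    have h0 : p 0 + q 0 = d 0 := by rw [← hpq]; simp
    have h1 : p 1 + q 1 = d 1 := by rw [← hpq]; simp
    rw [coeff_substPS ha f p (N := d 0 + d 1 + 1) (by omega),
      coeff_substPS ha g q (N := d 0 + d 1 + 1) (by omega)]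
  rw [Finset.sum_congr rfl step, ← MvPowerSeries.coeff_mul, ← map_mul,
    coeff_aeval ha, coeff_aeval ha]
  apply Finset.sum_congr rfl
  intro n hn
  rw [Finset.mem_range] at hn
  congr 1
  rw [Polynomial.coeff_mul, PowerSeries.coeff_trunc, if_pos hn, PowerSeries.coeff_mul]
  apply Finset.sum_congr rfl
  rintro ⟨i, j⟩ hij
  rw [Finset.HasAntidiagonal.mem_antidiagonal] at hij
  rw [PowerSeries.coeff_trunc, PowerSeries.coeff_trunc, if_pos (by omega), if_pos (by omega)]

end Aux

lemma catalanGF_eq : catalanGF = 1 + PowerSeries.X * catalanGF ^ 2 := by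
  ext n
  cases n with
  | zero => simp [catalanGF]
  | succ n =>
    rw [map_add, PowerSeries.coeff_one, if_neg n.succ_ne_zero, zero_add,
      PowerSeries.coeff_succ_X_mul, sq, PowerSeries.coeff_mul]
    simp only [catalanGF, PowerSeries.coeff_mk]
    rw [catalan_succ']
    push_cast
    rfl

/-- `C(x,y) = Φ(C(x))` satisfies `x·C(x,y)^2 = C(x,y) − (1-x)/(1-xy)`. -/
theorem runTransform_catalan_quadratic :
    MvPowerSeries.X 0 * runTransform catalanGF ^ 2 =
      runTransform catalanGF -
        (1 - MvPowerSeries.X 0) *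
          MvPowerSeries.invOfUnit (1 - MvPowerSeries.X 0 * MvPowerSeries.X 1) 1 := by
  have ha : MvPowerSeries.constantCoeff (σ := Fin 2) (R := ℤ)
      ((MvPowerSeries.X 0 * (1 - MvPowerSeries.X 0)) *
        MvPowerSeries.invOfUnit (1 - MvPowerSeries.X 0 * MvPowerSeries.X 1) 1) = 0 := by
    rw [map_mul, map_mul, MvPowerSeries.constantCoeff_X, zero_mul, zero_mul]
  set a : MvPowerSeries (Fin 2) ℤ :=
    (MvPowerSeries.X 0 * (1 - MvPowerSeries.X 0)) *
      MvPowerSeries.invOfUnit (1 - MvPowerSeries.X 0 * MvPowerSeries.X 1) 1 with ha_def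
  have hS : a * (substPS a catalanGF) ^ 2 = substPS a catalanGF - 1 := by
    conv_rhs => rw [catalanGF_eq]
    rw [substPS_add ha, substPS_one ha, substPS_mul ha, substPS_X ha, sq catalanGF,
      substPS_mul ha]
    ring
  unfold runTransform
  rw [← ha_def]
  set v : MvPowerSeries (Fin 2) ℤ := MvPowerSeries.invOfUnit
    (1 - MvPowerSeries.X 0 * MvPowerSeries.X 1) 1 with hv
  set S := substPS a catalanGF with hSdef
  linear_combination ((1 - MvPowerSeries.X 0) * v) * hS -
    ((1 - MvPowerSeries.X 0) * v * S ^ 2) * ha_def
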